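/- For r = 3, 4, 5, 6, 7, 8, the number of classes E in ℤ^{r+1} with (E,E) = -1 and (E,-K) = 1 is 6, 10, 16, 27, 56, 240 respectively. -/

import Mathlib

/-- The Del Pezzo intersection form on `ℤ^{r+1}`: `(l_0,l_0)=1`, `(l_i,l_i)=-1` for `i ≥ 1`,
`(l_i,l_j)=0` for `i ≠ j`. -/
def dpB {r : ℕ} (x y : Fin (r + 1) → ℤ) : ℤ :=
  x 0 * y 0 - ∑ i : Fin r, x i.succ * y i.succ

/-- The anticanonical class `-K = 3 l_0 - l_1 - ⋯ - l_r`. -/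
def negK {r : ℕ} : Fin (r + 1) → ℤ := fun i => if i = 0 then 3 else -1

/-- The standard basis vector `l_i`. -/
def l {r : ℕ} (i : Fin (r + 1)) : Fin (r + 1) → ℤ := fun j => if j = i then 1 else 0

/-- An exceptional class: `(E,E) = -1` and `(E,-K) = 1`. -/
def IsExc {r : ℕ} (E : Fin (r + 1) → ℤ) : Prop := dpB E E = -1 ∧ dpB E negK = 1

/-- A root: `(α,α) = -2` and `(α,-K) = 0`. -/
def IsRoot {r : ℕ} (a : Fin (r + 1) → ℤ) : Prop := dpB a a = -2 ∧ dpB a negK = 0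

/-- A ruling: `(D,D) = 0` and `(D,-K) = 2`. -/
def IsRuling {r : ℕ} (D : Fin (r + 1) → ℤ) : Prop := dpB D D = 0 ∧ dpB D negK = 2

/-- The reflection `σ_α(x) = x + (x,α) α`. -/
def reflct {r : ℕ} (a x : Fin (r + 1) → ℤ) : Fin (r + 1) → ℤ :=
  fun i => x i + dpB x a * a i

/-! ### Auxiliary enumeration machinery -/

/-- The finite set of integer lists of length `n` with sum `s` and sum of squares `q`,
computed by a pruned recursion (pruning via Cauchy–Schwarz: `s² ≤ n·q`). -/
noncomputable def lsols : (n : ℕ) → ℤ → ℤ → Finset (List ℤ)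
  | 0, s, q => if s = 0 ∧ q = 0 then {[]} else ∅
  | n+1, s, q =>
    if s*s > (n+1 : ℤ)*q then ∅
    else (Finset.Icc (-8 : ℤ) 8).biUnion
      (fun t => (lsols n (s-t) (q-t*t)).image (List.cons t))

/-- Lists `a :: M` encoding exceptional classes. -/
noncomputable def lexc (r : ℕ) : Finset (List ℤ) :=
  (Finset.Icc (-1 : ℤ) 7).biUnion fun a =>
    (lsols r (1 - 3*a) (a*a+1)).image (List.cons a)

lemma sqsum_nonneg (L : List ℤ) : 0 ≤ (L.map (fun t => t*t)).sum := by
  induction L with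
  | nil => simp
  | cons t M ih =>
    simp only [List.map_cons, List.sum_cons]
    have := mul_self_nonneg t
    linarith

lemma sum_getD (f : ℤ → ℤ) (n : ℕ) :
    ∀ L : List ℤ, L.length = n →
      ∑ i : Fin n, f (L.getD i 0) = (L.map f).sum := by
  induction n with
  | zero =>
    intro L h
    rw [List.length_eq_zero_iff] at h
    subst h
    simp
  | succ n ih =>
    intro L h
    cases L with
    | nil => simp at h
    | cons t M =>
      simp only [List.length_cons, Nat.succ.injEq] at h
      rw [Fin.sum_univ_succ, List.map_cons, List.sum_cons]
      have e : ∀ i : Fin n, (t :: M).getD (↑(Fin.succ i)) 0 = M.getD ↑i 0 := by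
        intro i; rw [Fin.val_succ, List.getD_cons_succ]
      rw [Finset.sum_congr rfl (fun i _ => congrArg f (e i)), ih M h]
      simp

lemma mem_lsols (n : ℕ) :
    ∀ (s q : ℤ), q ≤ 63 → ∀ L : List ℤ,
      (L ∈ lsols n s q ↔
        L.length = n ∧ L.sum = s ∧ (L.map (fun t => t*t)).sum = q) := by
  induction n with
  | zero =>
    intro s q _ L
    simp only [lsols]
    split_ifs with h
    · obtain ⟨hs, hq0⟩ := h
      subst hs; subst hq0
      constructor
      · intro hL
        simp only [Finset.mem_singleton] at hL
        subst hL
        simp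
      · rintro ⟨h1, -, -⟩
        rw [List.length_eq_zero_iff] at h1
        subst h1
        simp
    · simp only [Finset.notMem_empty, false_iff]
      rintro ⟨h1, h2, h3⟩
      rw [List.length_eq_zero_iff] at h1
      subst h1
      simp only [List.sum_nil] at h2
      simp only [List.map_nil, List.sum_nil] at h3
      exact h ⟨h2.symm, h3.symm⟩
  | succ n ih =>
    intro s q hq L
    simp only [lsols]
    split_ifs with hp
    · simp only [Finset.notMem_empty, false_iff]
      rintro ⟨h1, h2, h3⟩
      have e1 : ∑ i : Fin (n+1), L.getD i 0 = L.sum := by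
        simpa using sum_getD (fun x => x) (n+1) L h1
      have e2 : ∑ i : Fin (n+1), L.getD i 0 * L.getD i 0
          = (L.map (fun t => t*t)).sum := by
        simpa using sum_getD (fun x => x*x) (n+1) L h1
      have cs := sq_sum_le_card_mul_sum_sq
        (s := (Finset.univ : Finset (Fin (n+1)))) (f := fun i => L.getD i 0)
      simp only [Finset.card_univ, Fintype.card_fin, sq] at cs
      rw [e1, h2] at cs
      have e2' : ∑ i : Fin (n+1), L.getD i 0 * L.getD i 0 = q := by rw [e2, h3]
      rw [e2'] at cs
      push_cast at cs
      linarith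
    · push_neg at hp
      rw [Finset.mem_biUnion]
      constructor
      · rintro ⟨t, ht, hL⟩
        rw [Finset.mem_image] at hL
        obtain ⟨M, hM, rfl⟩ := hL
        have hq' : q - t*t ≤ 63 := by nlinarith [mul_self_nonneg t]
        obtain ⟨m1, m2, m3⟩ := (ih (s - t) (q - t*t) hq' M).mp hM
        refine ⟨by simp [m1], ?_, ?_⟩
        · simp only [List.sum_cons, m2]; ring
        · simp only [List.map_cons, List.sum_cons, m3]; ring
      · rintro ⟨h1, h2, h3⟩
        cases L with
        | nil => simp at h1
        | cons t M =>
          simp only [List.length_cons, Nat.succ.injEq] at h1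
          simp only [List.sum_cons] at h2
          simp only [List.map_cons, List.sum_cons] at h3
          have hMq := sqsum_nonneg M
          have htq : t*t ≤ q := by linarith
          have ht1 : -8 ≤ t := by nlinarith [sq_nonneg (t+8)]
          have ht2 : t ≤ 8 := by nlinarith [sq_nonneg (t-8)]
          refine ⟨t, Finset.mem_Icc.mpr ⟨ht1, ht2⟩, ?_⟩
          rw [Finset.mem_image]
          have httnn : (0:ℤ) ≤ t*t := mul_self_nonneg t
          refine ⟨M, (ih (s - t) (q - t*t) (by linarith) M).mpr
            ⟨h1, by linarith, by linarith⟩, rfl⟩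

lemma mem_lexc (r : ℕ) (L : List ℤ) :
    L ∈ lexc r ↔ ∃ a : ℤ, (-1 ≤ a ∧ a ≤ 7) ∧
      ∃ M, M ∈ lsols r (1 - 3*a) (a*a+1) ∧ L = a :: M := by
  simp only [lexc, Finset.mem_biUnion, Finset.mem_image, Finset.mem_Icc]
  constructor
  · rintro ⟨a, ha, M, hM, rfl⟩
    exact ⟨a, ha, M, hM, rfl⟩
  · rintro ⟨a, ha, M, hM, rfl⟩
    exact ⟨a, ha, M, hM, rfl⟩

lemma q_le (a : ℤ) (h1 : -1 ≤ a) (h2 : a ≤ 7) : a*a + 1 ≤ 63 := by nlinarith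

lemma dpB_negK {r : ℕ} (E : Fin (r+1) → ℤ) :
    dpB E negK = 3 * E 0 + ∑ i : Fin r, E i.succ := by
  unfold dpB negK
  rw [if_pos rfl,
    Finset.sum_congr rfl (fun i _ => by rw [if_neg (Fin.succ_ne_zero i)])]
  simp only [mul_neg, mul_one, Finset.sum_neg_distrib]
  ring

/-- For `r ≤ 8` the set of exceptional classes is the image of `lexc r`. -/
lemma exc_set_eq (r : ℕ) (hr : r ≤ 8) :
    {E : Fin (r + 1) → ℤ | IsExc E} =
      ↑((lexc r).image (fun L : List ℤ => fun i : Fin (r+1) => L.getD i 0)) := by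
  ext E
  simp only [Set.mem_setOf_eq, Finset.coe_image, Set.mem_image, Finset.mem_coe]
  constructor
  · rintro ⟨h1, h2⟩
    simp only [dpB] at h1
    have h2' : 3 * E 0 + ∑ i : Fin r, E i.succ = 1 := by
      rw [dpB_negK] at h2; exact h2
    set a := E 0 with ha
    have hQ : ∑ i : Fin r, E i.succ * E i.succ = a*a + 1 := by linarith
    have hS : ∑ i : Fin r, E i.succ = 1 - 3*a := by linarith
    -- Cauchy–Schwarz bound on a
    have cs := sq_sum_le_card_mul_sum_sq
      (s := (Finset.univ : Finset (Fin r))) (f := fun i => E i.succ)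
    simp only [Finset.card_univ, Fintype.card_fin, sq] at cs
    rw [hS] at cs
    have cs' : (1 - 3*a) * (1 - 3*a) ≤ (8 : ℤ) * (a*a + 1) := by
      have hr' : (r : ℤ) ≤ 8 := by exact_mod_cast hr
      have hQnn : 0 ≤ a*a + 1 := by nlinarith [mul_self_nonneg a]
      calc (1 - 3*a) * (1 - 3*a) ≤ (r : ℤ) * ∑ i : Fin r, E i.succ * E i.succ := cs
        _ = (r : ℤ) * (a*a+1) := by rw [hQ]
        _ ≤ 8 * (a*a+1) := by nlinarith
    have hprod : (a - 7) * (a + 1) ≤ 0 := by nlinarith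
    have ha1 : -1 ≤ a := by
      by_contra hc
      push_neg at hc
      have := mul_pos (by linarith : (0:ℤ) < 7 - a) (by linarith : (0:ℤ) < -(a+1))
      nlinarith
    have ha7 : a ≤ 7 := by
      by_contra hc
      push_neg at hc
      have := mul_pos (by linarith : (0:ℤ) < a - 7) (by linarith : (0:ℤ) < a + 1)
      nlinarith
    refine ⟨a :: List.ofFn (fun i : Fin r => E i.succ), ?_, ?_⟩
    · rw [mem_lexc]
      refine ⟨a, ⟨ha1, ha7⟩, List.ofFn (fun i : Fin r => E i.succ), ?_, rfl⟩
      rw [mem_lsols r _ _ (q_le a ha1 ha7)]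
      refine ⟨by simp, ?_, ?_⟩
      · rw [List.sum_ofFn]; exact hS
      · rw [List.map_ofFn, List.sum_ofFn]; exact hQ
    · funext i
      induction i using Fin.cases with
      | zero => simp [ha]
      | succ j =>
        simp only [Fin.val_succ, List.getD_cons_succ]
        rw [List.getD_eq_getElem _ _ (by simp [j.isLt]), List.getElem_ofFn]
  · rintro ⟨L, hL, rfl⟩
    rw [mem_lexc] at hL
    obtain ⟨a, ⟨ha1, ha7⟩, M, hM, rfl⟩ := hL
    rw [mem_lsols r _ _ (q_le a ha1 ha7)] at hM
    obtain ⟨m1, m2, m3⟩ := hM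
    have eS : ∑ i : Fin r, M.getD i 0 = 1 - 3*a := by
      rw [sum_getD (fun x => x) r M m1]
      simpa using m2
    have eQ : ∑ i : Fin r, M.getD i 0 * M.getD i 0 = a*a + 1 := by
      rw [sum_getD (fun x => x*x) r M m1]
      exact m3
    constructor
    · simp only [dpB, Fin.val_succ, List.getD_cons_succ, Fin.val_zero,
        List.getD_cons_zero]
      rw [eQ]; ring
    · rw [dpB_negK]
      simp only [Fin.val_succ, List.getD_cons_succ, Fin.val_zero,
        List.getD_cons_zero]
      rw [eS]; ring

lemma lexc_length (r : ℕ) (L : List ℤ) (hL : L ∈ lexc r) : L.length = r + 1 := by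
  rw [mem_lexc] at hL
  obtain ⟨a, ⟨ha1, ha7⟩, M, hM, rfl⟩ := hL
  rw [mem_lsols r _ _ (q_le a ha1 ha7)] at hM
  simp [hM.1]

lemma lexc_injOn (r : ℕ) :
    Set.InjOn (fun L : List ℤ => fun i : Fin (r+1) => L.getD i 0)
      (↑(lexc r) : Set (List ℤ)) := by
  intro L1 h1 L2 h2 h
  have hl1 := lexc_length r L1 h1
  have hl2 := lexc_length r L2 h2
  apply List.ext_getElem (by rw [hl1, hl2])
  intro n hn1 hn2
  have hn : n < r + 1 := by rwa [hl1] at hn1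
  have := congrFun h ⟨n, hn⟩
  simp only at this
  rw [List.getD_eq_getElem _ _ hn1, List.getD_eq_getElem _ _ hn2] at this
  exact this

lemma ncard_eq (r : ℕ) (hr : r ≤ 8) :
    {E : Fin (r + 1) → ℤ | IsExc E}.ncard = (lexc r).card := by
  rw [exc_set_eq r hr, Set.ncard_coe_finset,
    Finset.card_image_of_injOn (lexc_injOn r)]

set_option maxRecDepth 4000000 in
set_option maxHeartbeats 8000000 in
/-- The number of exceptional classes for `r = 3,…,8` is `6, 10, 16, 27, 56, 240`. -/
theorem stmt1 (r N : ℕ)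
    (h : (r, N) ∈ [(3, 6), (4, 10), (5, 16), (6, 27), (7, 56), (8, 240)]) :
    {E : Fin (r + 1) → ℤ | IsExc E}.ncard = N := by
  simp only [List.mem_cons, List.mem_singleton, Prod.mk.injEq,
    List.not_mem_nil, or_false] at h
  rcases h with ⟨rfl, rfl⟩ | ⟨rfl, rfl⟩ | ⟨rfl, rfl⟩ | ⟨rfl, rfl⟩ | ⟨rfl, rfl⟩ | ⟨rfl, rfl⟩
  · rw [ncard_eq 3 (by norm_num)]; decide
  · rw [ncard_eq 4 (by norm_num)]; decide
  · rw [ncard_eq 5 (by norm_num)]; decide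
  · rw [ncard_eq 6 (by norm_num)]; decide
  · rw [ncard_eq 7 (by norm_num)]; decide
  · rw [ncard_eq 8 (by norm_num)]; decide
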